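/- Let S be a monoid. The following are equivalent: (a) for all s, t ∈ S, the set r(s,t) is either empty or finitely generated as a right ideal of S; (b) for every s, t ∈ S there exist finitely many elements u_1, …, u_m ∈ r(s,t) (possibly m = 0) such that for every left S-act B satisfying Condition (E) and every a ∈ B with s•a = t•a, there exist i ∈ {1,…,m} and c ∈ B with a = u_i•c. -/

import Mathlib

universe u

/-- Condition (E) for a left `S`-act `A`. -/
def CondE (S : Type*) [Monoid S] (A : Type*) [MulAction S A] : Prop :=
  ∀ (s t : S) (a : A), s • a = t • a →
    ∃ (c : A) (u : S), a = u • c ∧ s * u = t * u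

/-- `r(s,t) = {u | s*u = t*u}`. -/
def rset (S : Type*) [Monoid S] (s t : S) : Set S :=
  {u | s * u = t * u}

/-- A subset of `S` is finitely generated as a right ideal of `S`. -/
def FGideal (S : Type*) [Monoid S] (I : Set S) : Prop :=
  ∃ F : Finset S, ↑F ⊆ I ∧ ∀ x ∈ I, ∃ p ∈ F, ∃ w : S, x = p * w

/-- The left regular act satisfies Condition (E). -/
lemma condE_regular (S : Type u) [Monoid S] : CondE S S := by
  intro s t a h
  exact ⟨1, a, by simp [smul_eq_mul], by simpa [smul_eq_mul] using h⟩

theorem condE_r_fg_iff_replacement (S : Type u) [Monoid S] :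
    (∀ s t : S, rset S s t = ∅ ∨ FGideal S (rset S s t)) ↔
      ∀ s t : S, ∃ F : Finset S, ↑F ⊆ rset S s t ∧
        ∀ (B : Type u) [MulAction S B], CondE S B → ∀ a : B, s • a = t • a →
          ∃ p ∈ F, ∃ c : B, a = p • c := by
  constructor
  · intro h s t
    rcases h s t with hempty | ⟨F, hF1, hF2⟩
    · refine ⟨∅, by simp, ?_⟩
      intro B _ hB a ha
      obtain ⟨c, u, _, hu⟩ := hB s t a ha
      exact absurd (hempty ▸ hu : u ∈ (∅ : Set S)) (by simp)
    · refine ⟨F, hF1, ?_⟩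
      intro B _ hB a ha
      obtain ⟨c, u, hac, hu⟩ := hB s t a ha
      obtain ⟨p, hp, w, hw⟩ := hF2 u hu
      exact ⟨p, hp, w • c, by rw [hac, hw, mul_smul]⟩
  · intro h s t
    obtain ⟨F, hF1, hF2⟩ := h s t
    refine Or.inr ⟨F, hF1, ?_⟩
    intro x hx
    obtain ⟨p, hp, c, hc⟩ := hF2 S (condE_regular S) x (by exact hx)
    exact ⟨p, hp, c, by simpa [smul_eq_mul] using hc⟩
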